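/- For every capacity C > 0, there exists a distortion value D with 2^{-2C} ≤ D ≤ 1 such that (2·D12(D,C) + 2·D)/4 < 2^{-2C}, where D12(D,C) = 2^{-4C} / ((D + √(D² − 2^{-4C}))·(2 − D − √(D² − 2^{-4C}))) is the Ozarow joint-distortion bound for balanced two-description coding of a unit-variance Gaussian source. That is, an optimized balanced two-description code achieves strictly smaller average distortion over the four sink nodes than the value 2^{-2C} achievable by any separate source and network coding scheme. -/

import Mathlib

/-- For every capacity `C > 0` there is a balanced side distortion `D` in
`[2^{-2C}, 1]` such that the average distortion `(2·D12 + 2·D)/4` with the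
Ozarow joint-distortion bound `D12` is strictly below `2^{-2C}`, the best
distortion achievable by separate source and network coding. -/
theorem stmt_0 (C : ℝ) (hC : 0 < C) :
    ∃ D : ℝ, (2:ℝ) ^ (-(2*C)) ≤ D ∧ D ≤ 1 ∧
      (2 * ((2:ℝ) ^ (-(4*C)) /
          ((D + Real.sqrt (D^2 - (2:ℝ) ^ (-(4*C)))) *
           (2 - D - Real.sqrt (D^2 - (2:ℝ) ^ (-(4*C)))))) + 2 * D) / 4
        < (2:ℝ) ^ (-(2*C)) := by
  set a : ℝ := (2:ℝ) ^ (-(2*C)) with ha_def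
  have ha : 0 < a := Real.rpow_pos_of_pos (by norm_num) _
  have ha1 : a < 1 := by
    apply Real.rpow_lt_one_of_one_lt_of_neg (by norm_num)
    linarith
  have h4 : (2:ℝ) ^ (-(4*C)) = a ^ 2 := by
    rw [ha_def, ← Real.rpow_natCast ((2:ℝ) ^ (-(2*C))) 2,
      ← Real.rpow_mul (by norm_num)]
    norm_num
    ring_nf
  refine ⟨a, le_refl _, ha1.le, ?_⟩
  rw [h4]
  have hs : Real.sqrt (a ^ 2 - a ^ 2) = 0 := by simp
  rw [hs]
  have h2a : 0 < 2 - a := by linarith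
  have key : a ^ 2 / ((a + 0) * (2 - a - 0)) = a / (2 - a) := by
    rw [add_zero, sub_zero, pow_two, mul_div_mul_left _ _ ha.ne']
  rw [key]
  rw [div_lt_iff₀ (by norm_num)]
  have h1 : a / (2 - a) < a := by
    rw [div_lt_iff₀ h2a]; nlinarith
  linarith
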